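/- arXiv:1509.08811 — 2 statements merged into one kernel-verified Lean document; each statement's English description precedes it below -/
import Mathlib

section
/- If f is an even polynomial of degree at most 2j with f(0) = 0, then f is a rational linear combination of B_1, …, B_j only (no B_0 term), where B_k(x) = C(x+k, 2k) + C(-x+k, 2k). -/
/-- Binomial coefficient polynomial `x(x-1)...(x-j+1)/j!` at integer `x`; zero for `j < 0`. -/
def binC (x j : ℤ) : ℚ :=
  if j < 0 then 0 else (∏ t ∈ Finset.range j.toNat, ((x : ℚ) - t)) / (j.toNat).factorial

open Polynomial in
/-- The binomial coefficient polynomial `p(p-1)...(p-n+1)/n!` of a polynomial `p`,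
zero for negative `n`. -/
noncomputable def Cpol (p : Polynomial ℚ) (n : ℤ) : Polynomial ℚ :=
  if n < 0 then 0 else
    C (1 / (n.toNat).factorial : ℚ) * ∏ t ∈ Finset.range n.toNat, (p - C (t : ℚ))

open Polynomial in
/-- `B_k = C(X+k, 2k) + C(-X+k, 2k)` as a polynomial. -/
noncomputable def Bpol (k : ℕ) : Polynomial ℚ :=
  Cpol (X + C (k : ℚ)) (2 * k) + Cpol (-X + C (k : ℚ)) (2 * k)

open Polynomial Finset

lemma coeff_comp_neg_X (p : ℚ[X]) (n : ℕ) :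
    (p.comp (-X)).coeff n = (-1) ^ n * p.coeff n := by
  induction p using Polynomial.induction_on' with
  | add p q hp hq => simp [add_comp, hp, hq, mul_add]
  | monomial m a =>
    rw [← C_mul_X_pow_eq_monomial]
    simp only [mul_comp, C_comp, pow_comp, X_comp]
    rw [neg_pow]
    have h1 : C a * ((-1 : ℚ[X]) ^ m * X ^ m) = C ((-1 : ℚ) ^ m) * (C a * X ^ m) := by
      simp only [map_pow, map_neg, map_one]; ring
    rw [h1, coeff_C_mul, C_mul_X_pow_eq_monomial, coeff_monomial]
    by_cases h : n = m
    · subst h; simp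
    · simp [Ne.symm h]

lemma even_coeff_odd (f : ℚ[X]) (h : ∀ x : ℚ, f.eval (-x) = f.eval x)
    {n : ℕ} (hn : Odd n) : f.coeff n = 0 := by
  have hc : f.comp (-X) = f := Polynomial.funext fun x => by
    simp [eval_comp, h]
  have h2 := coeff_comp_neg_X f n
  rw [hc, hn.neg_one_pow] at h2
  linarith

lemma Bpol_eq (k : ℕ) :
    Bpol k = C (1 / ((2 * k).factorial) : ℚ) *
      ((∏ t ∈ Finset.range (2 * k), (X + C ((k : ℚ) - t))) +
       ∏ t ∈ Finset.range (2 * k), (X + C ((t : ℚ) - k))) := by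
  have hn : ¬ ((2 * (k : ℤ)) < 0) := by omega
  have ht : (2 * (k : ℤ)).toNat = 2 * k := by omega
  unfold Bpol Cpol
  rw [if_neg hn, if_neg hn, ht, mul_add]
  congr 1
  · congr 1
    exact Finset.prod_congr rfl fun t _ => by rw [map_sub]; ring
  · congr 1
    have : ∀ t ∈ Finset.range (2 * k), -X + C (k : ℚ) - C (t : ℚ) =
        (-1) * (X + C ((t : ℚ) - k)) := fun t _ => by rw [map_sub]; ring
    rw [Finset.prod_congr rfl this, Finset.prod_mul_distrib, Finset.prod_const,
      Finset.card_range, pow_mul]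
    norm_num

lemma prod_monic (s : Finset ℕ) (g : ℕ → ℚ) :
    (∏ t ∈ s, (X + C (g t))).Monic :=
  monic_prod_of_monic _ _ fun t _ => monic_X_add_C _

lemma prod_natDegree (s : Finset ℕ) (g : ℕ → ℚ) :
    (∏ t ∈ s, (X + C (g t))).natDegree = s.card := by
  rw [natDegree_prod _ _ fun t _ => (monic_X_add_C (g t)).ne_zero]
  simp [natDegree_X_add_C]

lemma Bpol_natDegree_le (k : ℕ) : (Bpol k).natDegree ≤ 2 * k := by
  rw [Bpol_eq]
  refine (natDegree_C_mul_le _ _).trans ((natDegree_add_le _ _).trans ?_)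
  rw [prod_natDegree, prod_natDegree, Finset.card_range]
  simp

lemma Bpol_coeff (k : ℕ) : (Bpol k).coeff (2 * k) = 2 / (2 * k).factorial := by
  rw [Bpol_eq, coeff_C_mul, coeff_add]
  have h1 := (prod_monic (Finset.range (2 * k)) (fun t => (k : ℚ) - t)).coeff_natDegree
  have h2 := (prod_monic (Finset.range (2 * k)) (fun t => (t : ℚ) - k)).coeff_natDegree
  rw [prod_natDegree, Finset.card_range] at h1 h2
  rw [h1, h2]
  ring

lemma Bpol_eval_neg (k : ℕ) (x : ℚ) : (Bpol k).eval (-x) = (Bpol k).eval x := by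
  have key : ∀ y : ℚ, ∀ g h : ℕ → ℚ, (∀ t, g t = - h t) →
      Polynomial.eval (-y) (∏ t ∈ Finset.range (2 * k), (X + C (g t))) =
      Polynomial.eval y (∏ t ∈ Finset.range (2 * k), (X + C (h t))) := by
    intro y g h hgh
    simp only [eval_prod, eval_add, eval_X, eval_C]
    have : ∀ t ∈ Finset.range (2 * k), -y + g t = (-1) * (y + h t) := by
      intro t _; rw [hgh t]; ring
    rw [Finset.prod_congr rfl this, Finset.prod_mul_distrib, Finset.prod_const,
      Finset.card_range, pow_mul]
    norm_num
  rw [Bpol_eq]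
  simp only [eval_mul, eval_C, eval_add]
  rw [key x (fun t => (k : ℚ) - t) (fun t => (t : ℚ) - k) (fun t => by ring),
    key x (fun t => (t : ℚ) - k) (fun t => (k : ℚ) - t) (fun t => by ring), add_comm]

lemma Bpol_eval_zero (k : ℕ) (hk : 1 ≤ k) : (Bpol k).eval 0 = 0 := by
  rw [Bpol_eq]
  simp only [eval_mul, eval_C, eval_add, eval_prod, eval_X, zero_add]
  rw [Finset.prod_eq_zero (Finset.mem_range.mpr (show k < 2 * k by omega)) (by simp),
    Finset.prod_eq_zero (Finset.mem_range.mpr (show k < 2 * k by omega)) (by simp)]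
  simp

open Polynomial in
theorem even_poly_basis_no_B0 (j : ℕ) (f : Polynomial ℚ)
    (heven : ∀ x : ℚ, f.eval (-x) = f.eval x) (hdeg : f.natDegree ≤ 2 * j)
    (h0 : f.eval 0 = 0) :
    ∃ c : Fin j → ℚ, f = ∑ k : Fin j, C (c k) * Bpol (k + 1) := by
  induction j generalizing f with
  | zero =>
    refine ⟨Fin.elim0, ?_⟩
    have hf : f = C (f.coeff 0) := eq_C_of_natDegree_le_zero (by simpa using hdeg)
    have hz : f.coeff 0 = 0 := by rw [← coeff_zero_eq_eval_zero] at h0; exact h0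
    rw [hf, hz]
    simp
  | succ j ih =>
    set a : ℚ := f.coeff (2 * (j + 1)) * (2 * (j + 1)).factorial / 2 with ha
    set g : ℚ[X] := f - C a * Bpol (j + 1) with hg
    have hfact : (((2 * (j + 1)).factorial : ℚ)) ≠ 0 := by
      exact_mod_cast (Nat.factorial_pos _).ne'
    have hgeven : ∀ x : ℚ, g.eval (-x) = g.eval x := by
      intro x
      simp only [hg, eval_sub, eval_mul, eval_C, heven x, Bpol_eval_neg (j + 1) x]
    have hg0 : g.eval 0 = 0 := by
      rw [hg]
      simp only [eval_sub, eval_mul, eval_C, h0, Bpol_eval_zero (j + 1) (by omega)]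
      ring
    have hgdeg : g.natDegree ≤ 2 * j := by
      rw [natDegree_le_iff_coeff_eq_zero]
      intro N hN
      rcases lt_trichotomy N (2 * (j + 1)) with h | h | h
      · exact even_coeff_odd g hgeven ⟨j, by omega⟩
      · subst h
        simp only [hg, coeff_sub, coeff_C_mul, Bpol_coeff]
        rw [ha]
        field_simp
        ring
      · have h1 : f.coeff N = 0 := coeff_eq_zero_of_natDegree_lt (lt_of_le_of_lt hdeg h)
        have h2 : (Bpol (j + 1)).coeff N = 0 :=
          coeff_eq_zero_of_natDegree_lt (lt_of_le_of_lt (Bpol_natDegree_le _) h)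
        simp [hg, h1, h2, coeff_C_mul]
    obtain ⟨c, hc⟩ := ih g hgeven hgdeg hg0
    refine ⟨Fin.snoc c a, ?_⟩
    rw [Fin.sum_univ_castSucc]
    have hlast : ((Fin.last j : Fin (j + 1)) : ℕ) = j := rfl
    have hf : f = g + C a * Bpol (j + 1) := by rw [hg]; ring
    rw [hf, hc]
    congr 1
    · refine Finset.sum_congr rfl fun k _ => ?_
      rw [Fin.snoc_castSucc, Fin.coe_castSucc]
    · rw [Fin.snoc_last, hlast]
end

section
/- For all integers m and k, the relation rel1(m,k) = 0 holds, where rel1(m,k) = −32(3−2k)²(m−k+1)(m−k+2)·d(m,k−2) + 4(m−k+1)·(2km² − 2(k−1)(8k−9)m + (2k−3)(8(k−2)k+9))·d(m,k−1) + k(m−2k+2)(m−2k+3)(2m−2k+1)·d(m,k). -/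
lemma binC_neg (x j : ℤ) (h : j < 0) : binC x j = 0 := by simp [binC, h]

lemma binC_zero (x : ℤ) : binC x 0 = 1 := by simp [binC]

lemma binC_nonneg (x j : ℤ) (h : 0 ≤ j) :
    binC x j = (∏ t ∈ Finset.range j.toNat, ((x : ℚ) - t)) / (j.toNat).factorial := by
  simp [binC, not_lt.2 h]

lemma binC_La (x j : ℤ) : ((j:ℚ)+1) * binC x (j+1) = ((x:ℚ) - j) * binC x j := by
  rcases lt_trichotomy j (-1) with h | h | h
  · rw [binC_neg x (j+1) (by omega), binC_neg x j (by omega)]; ring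
  · subst_vars; rw [binC_neg x (-1) (by omega)]; norm_num
  · have hj : 0 ≤ j := by omega
    rw [binC_nonneg x j hj, binC_nonneg x (j+1) (by omega)]
    have h1 : (j+1).toNat = j.toNat + 1 := by omega
    have h2 : ((j.toNat : ℚ)) = (j : ℚ) := by exact_mod_cast Int.toNat_of_nonneg hj
    rw [h1, Finset.prod_range_succ, Nat.factorial_succ, h2]
    have hf : ((j.toNat).factorial : ℚ) ≠ 0 := by positivity
    have hf2 : (((j.toNat).factorial : ℚ)) * ((j:ℚ)+1) ≠ 0 := by
      apply mul_ne_zero hf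
      intro hz
      have : (j:ℚ) = -1 := by linarith
      have : j = -1 := by exact_mod_cast this
      omega
    push_cast
    field_simp
    rw [h2]
    ring
lemma binC_Lb (x j : ℤ) : ((x:ℚ) - j) * binC x j = (x:ℚ) * binC (x-1) j := by
  rcases lt_or_ge j 0 with h | h
  · rw [binC_neg x j h, binC_neg (x-1) j h]; ring
  · rw [binC_nonneg x j h, binC_nonneg (x-1) j h]
    set n := j.toNat with hn
    have h2 : ((n : ℚ)) = (j : ℚ) := by rw [hn]; exact_mod_cast Int.toNat_of_nonneg h
    have l3 : ∏ t ∈ Finset.range n, (((x-1:ℤ):ℚ) - t) = ∏ t ∈ Finset.range n, ((x:ℚ) - (t+1)) :=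
      Finset.prod_congr rfl (by intro t _; push_cast; ring)
    have key : ((x:ℚ) - j) * (∏ t ∈ Finset.range n, ((x : ℚ) - t))
        = (x:ℚ) * ∏ t ∈ Finset.range n, (((x-1 : ℤ) : ℚ) - t) := by
      rw [l3]
      have l1 : ((x:ℚ) - j) * (∏ t ∈ Finset.range n, ((x : ℚ) - t))
          = ∏ t ∈ Finset.range (n+1), ((x : ℚ) - t) := by
        rw [Finset.prod_range_succ, ← h2]; ring
      have l2 : ∏ t ∈ Finset.range (n+1), ((x : ℚ) - t)
          = (∏ t ∈ Finset.range n, ((x : ℚ) - (t+1))) * ((x:ℚ) - 0) := by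
        rw [Finset.prod_range_succ']
        apply congrArg₂ _ (Finset.prod_congr rfl (by intro t _; push_cast; ring)) (by norm_num)
      rw [l1, l2]; ring
    have hf : ((n.factorial : ℚ)) ≠ 0 := by positivity
    field_simp
    push_cast at key ⊢
    linear_combination key

lemma binC_natCast (n j : ℕ) : binC n j = (n.choose j : ℚ) := by
  rw [binC_nonneg _ _ (by positivity)]
  have hj : ((j:ℤ)).toNat = j := by omega
  rw [hj]
  rcases le_or_gt j n with h | h
  · have key : ∏ t ∈ Finset.range j, (((n:ℤ) : ℚ) - t) = (n.descFactorial j : ℚ) := by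
      rw [Nat.descFactorial_eq_prod_range]
      push_cast
      apply Finset.prod_congr rfl
      intro t ht
      have : t < j := Finset.mem_range.1 ht
      have : t ≤ n := by omega
      push_cast [Nat.cast_sub this]
      ring
    rw [key, Nat.descFactorial_eq_factorial_mul_choose]
    push_cast
    field_simp
  · have h0 : ((n:ℤ):ℚ) - (n:ℕ) = 0 := by push_cast; ring
    have : ∏ t ∈ Finset.range j, (((n:ℤ) : ℚ) - t) = 0 :=
      Finset.prod_eq_zero (Finset.mem_range.2 h) h0
    rw [this, Nat.choose_eq_zero_of_lt h]
    simp

-- (k+1) * binC (2(k+1)) (k+1) = 2(2k+1) * binC (2k) k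
lemma binC_central (k : ℤ) : ((k:ℚ)+1) * binC (2*(k+1)) (k+1) = 2*(2*(k:ℚ)+1) * binC (2*k) k := by
  rcases lt_trichotomy k (-1) with h | h | h
  · rw [show binC (2*(k+1)) (k+1) = 0 by simp [binC, show k+1<0 by omega],
        show binC (2*k) k = 0 by simp [binC, show k<0 by omega]]
    ring
  · subst_vars
    norm_num
    rw [show binC (-2) (-1) = 0 by simp [binC]]
  · have hk : 0 ≤ k := by omega
    obtain ⟨n, rfl⟩ : ∃ n : ℕ, k = (n:ℤ) := ⟨k.toNat, by omega⟩
    have e1 : (2*((n:ℤ)+1)) = ((2*(n+1) : ℕ) : ℤ) := by push_cast; ring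
    have e2 : ((n:ℤ)+1) = (((n+1):ℕ) : ℤ) := by push_cast; ring
    have e3 : (2*(n:ℤ)) = ((2*n : ℕ) : ℤ) := by push_cast; ring
    rw [e1, e2, e3, binC_natCast, binC_natCast]
    have h1 := Nat.succ_mul_centralBinom_succ n
    have h2 : (2*(n+1)).choose (n+1) = Nat.centralBinom (n+1) := by
      rw [Nat.centralBinom_eq_two_mul_choose]
    have h3 : (2*n).choose n = Nat.centralBinom n := by
      rw [Nat.centralBinom_eq_two_mul_choose]
    rw [h2, h3]
    have : (((n:ℚ)+1) * (Nat.centralBinom (n+1) : ℚ)) = 2*(2*n+1)*(Nat.centralBinom n : ℚ) := by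
      exact_mod_cast congrArg (Nat.cast : ℕ → ℚ) h1
    push_cast at this ⊢
    linear_combination this

noncomputable def sigmaP (m k i : ℤ) : ℚ := ((36) + (-168)*(i:ℚ) + (240)*(i:ℚ)^2 + (-96)*(i:ℚ)^3 + (-24)*(k:ℚ) + (112)*(k:ℚ)*(i:ℚ) + (-160)*(k:ℚ)*(i:ℚ)^2 + (64)*(k:ℚ)*(i:ℚ)^3 + (108)*(m:ℚ) + (-288)*(m:ℚ)*(i:ℚ) + (144)*(m:ℚ)*(i:ℚ)^2 + (-72)*(m:ℚ)*(k:ℚ) + (192)*(m:ℚ)*(k:ℚ)*(i:ℚ) + (-96)*(m:ℚ)*(k:ℚ)*(i:ℚ)^2 + (72)*(m:ℚ)^2 + (-48)*(m:ℚ)^2*(i:ℚ) + (-48)*(m:ℚ)^2*(k:ℚ) + (32)*(m:ℚ)^2*(k:ℚ)*(i:ℚ))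

noncomputable def gg (m k i : ℤ) : ℚ :=
  binC k i * binC m i * binC i (m - k) / ((2*(i:ℚ)-1)*(2*(m:ℚ)-2*i-1))

noncomputable def GG (m k i : ℤ) : ℚ :=
  ((m:ℚ)-i+1)*((k:ℚ)-i+1)*sigmaP m k i * binC k (i-1) * binC m (i-1) * binC (i-1) (m-k) /
    ((2*(i:ℚ)-3)*(2*(m:ℚ)-2*i+1))

lemma odd_ne (a : ℤ) : ((2*a+1 : ℤ) : ℚ) ≠ 0 := by
  exact_mod_cast (by omega : (2*a+1 : ℤ) ≠ 0)

lemma tele (m k i : ℤ) :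
    ((k:ℚ)*((k:ℚ)-1)*(-32*(2*(k:ℚ)-3)*(2*(k:ℚ)-1)*((m:ℚ)-(k:ℚ)+1)*((m:ℚ)-(k:ℚ)+2))) * gg m (k-2) i
    + (2*(k:ℚ)*(2*(k:ℚ)-3)*(4*((m:ℚ)-(k:ℚ)+1)*(2*(m:ℚ)^2*(k:ℚ)-16*(m:ℚ)*(k:ℚ)^2+18*(m:ℚ)*(k:ℚ)-6*(m:ℚ)+16*(k:ℚ)^3-24*(k:ℚ)^2+14*(k:ℚ)-3))) * gg m (k-1) i
    + (4*(2*(k:ℚ)-3)*(2*(k:ℚ)-1)*((k:ℚ)*((m:ℚ)-2*(k:ℚ))*(2*((m:ℚ)-2*(k:ℚ))*((m:ℚ)-(k:ℚ))+(m:ℚ)-1))) * gg m k i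
    = GG m k (i+1) - GG m k i := by
  have hd1 : (2*(i:ℚ)-1) ≠ 0 := by
    have := odd_ne (i-1); push_cast at this; intro h; apply this; linarith
  have hd2 : (2*(m:ℚ)-2*(i:ℚ)-1) ≠ 0 := by
    have := odd_ne (m-i-1); push_cast at this; intro h; apply this; linarith
  have hd3 : (2*(i:ℚ)-3) ≠ 0 := by
    have := odd_ne (i-2); push_cast at this; intro h; apply this; linarith
  have hd4 : (2*(m:ℚ)-2*(i:ℚ)+1) ≠ 0 := by
    have := odd_ne (m-i); push_cast at this; intro h; apply this; linarith
  have e1 : ((k:ℚ)-1-(i:ℚ)) * binC (k-1) i = ((k:ℚ)-1) * binC (k-2) i := by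
    have := binC_Lb (k-1) i
    rw [show (k:ℤ)-1-1 = k-2 from by ring] at this
    push_cast at this
    linear_combination this
  have e2 : ((m:ℚ)-(k:ℚ)+2) * binC i (m-k+2) = ((i:ℚ)-(m:ℚ)+(k:ℚ)-1) * binC i (m-k+1) := by
    have := binC_La i (m-k+1)
    rw [show (m:ℤ)-k+1+1 = m-k+2 from by ring] at this
    push_cast at this
    linear_combination this
  have e3 : ((k:ℚ)-(i:ℚ)) * binC k i = (k:ℚ) * binC (k-1) i := by
    have := binC_Lb k i
    push_cast at this
    linear_combination this
  have e4 : ((m:ℚ)-(k:ℚ)+1) * binC i (m-k+1) = ((i:ℚ)-(m:ℚ)+(k:ℚ)) * binC i (m-k) := by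
    have := binC_La i (m-k)
    rw [show (m:ℤ)-k+1 = m-k+1 from by ring] at this
    push_cast at this
    linear_combination this
  have e5 : (i:ℚ) * binC k i = ((k:ℚ)-(i:ℚ)+1) * binC k (i-1) := by
    have := binC_La k (i-1)
    rw [show (i:ℤ)-1+1 = i from by ring] at this
    push_cast at this
    linear_combination this
  have e6 : (i:ℚ) * binC m i = ((m:ℚ)-(i:ℚ)+1) * binC m (i-1) := by
    have := binC_La m (i-1)
    rw [show (i:ℤ)-1+1 = i from by ring] at this
    push_cast at this
    linear_combination this
  have e7 : ((i:ℚ)-(m:ℚ)+(k:ℚ)) * binC i (m-k) = (i:ℚ) * binC (i-1) (m-k) := by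
    have := binC_Lb i (m-k)
    push_cast at this
    linear_combination this
  simp only [gg, GG, sigmaP]
  rw [show m-(k-2) = m-k+2 from by ring, show m-(k-1) = m-k+1 from by ring,
      show i+1-1 = i from by ring]
  push_cast
  rw [show (2*((i:ℚ)+1)-3) = 2*(i:ℚ)-1 from by ring,
      show (2*(m:ℚ)-2*((i:ℚ)+1)+1) = 2*(m:ℚ)-2*(i:ℚ)-1 from by ring]
  rw [← mul_div_assoc, ← mul_div_assoc, ← mul_div_assoc, ← add_div, ← add_div]
  rw [div_sub_div _ _ (mul_ne_zero hd1 hd2) (mul_ne_zero hd3 hd4),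
      div_eq_div_iff (mul_ne_zero hd1 hd2) (mul_ne_zero (mul_ne_zero hd1 hd2) (mul_ne_zero hd3 hd4))]
  linear_combination
      (((2*(i:ℚ)-1)*(2*(m:ℚ)-2*(i:ℚ)-1)) * (((288)*(k:ℚ) + (-768)*(k:ℚ)*(i:ℚ) + (384)*(k:ℚ)*(i:ℚ)^2 + (-1056)*(k:ℚ)^2 + (2816)*(k:ℚ)^2*(i:ℚ) + (-1408)*(k:ℚ)^2*(i:ℚ)^2 + (1152)*(k:ℚ)^3 + (-3072)*(k:ℚ)^3*(i:ℚ) + (1536)*(k:ℚ)^3*(i:ℚ)^2 + (-384)*(k:ℚ)^4 + (1024)*(k:ℚ)^4*(i:ℚ) + (-512)*(k:ℚ)^4*(i:ℚ)^2 + (864)*(m:ℚ)*(k:ℚ) + (-1152)*(m:ℚ)*(k:ℚ)*(i:ℚ) + (384)*(m:ℚ)*(k:ℚ)*(i:ℚ)^2 + (-2880)*(m:ℚ)*(k:ℚ)^2 + (3456)*(m:ℚ)*(k:ℚ)^2*(i:ℚ) + (-1024)*(m:ℚ)*(k:ℚ)^2*(i:ℚ)^2 + (2688)*(m:ℚ)*(k:ℚ)^3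 + (-2560)*(m:ℚ)*(k:ℚ)^3*(i:ℚ) + (512)*(m:ℚ)*(k:ℚ)^3*(i:ℚ)^2 + (-768)*(m:ℚ)*(k:ℚ)^4 + (512)*(m:ℚ)*(k:ℚ)^4*(i:ℚ) + (576)*(m:ℚ)^2*(k:ℚ) + (-384)*(m:ℚ)^2*(k:ℚ)*(i:ℚ) + (-1536)*(m:ℚ)^2*(k:ℚ)^2 + (1024)*(m:ℚ)^2*(k:ℚ)^2*(i:ℚ) + (768)*(m:ℚ)^2*(k:ℚ)^3 + (-512)*(m:ℚ)^2*(k:ℚ)^3*(i:ℚ))) * (-((m:ℚ)-(k:ℚ)+2) * binC i (m-k+2) * binC m i)) * e1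
    + (((2*(i:ℚ)-1)*(2*(m:ℚ)-2*(i:ℚ)-1)) * (((288)*(k:ℚ) + (-768)*(k:ℚ)*(i:ℚ) + (384)*(k:ℚ)*(i:ℚ)^2 + (-1056)*(k:ℚ)^2 + (2816)*(k:ℚ)^2*(i:ℚ) + (-1408)*(k:ℚ)^2*(i:ℚ)^2 + (1152)*(k:ℚ)^3 + (-3072)*(k:ℚ)^3*(i:ℚ) + (1536)*(k:ℚ)^3*(i:ℚ)^2 + (-384)*(k:ℚ)^4 + (1024)*(k:ℚ)^4*(i:ℚ) + (-512)*(k:ℚ)^4*(i:ℚ)^2 + (864)*(m:ℚ)*(k:ℚ) + (-1152)*(m:ℚ)*(k:ℚ)*(i:ℚ) + (384)*(m:ℚ)*(k:ℚ)*(i:ℚ)^2 + (-2880)*(m:ℚ)*(k:ℚ)^2 + (3456)*(m:ℚ)*(k:ℚ)^2*(i:ℚ) + (-1024)*(m:ℚ)*(k:ℚ)^2*(i:ℚ)^2 + (2688)*(m:ℚ)*(k:ℚ)^3 + (-2560)*(m:ℚ)*(k:ℚ)^3*(i:ℚ) + (512)*(m:ℚ)*(k:ℚ)^3*(i:ℚ)^2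 + (-768)*(m:ℚ)*(k:ℚ)^4 + (512)*(m:ℚ)*(k:ℚ)^4*(i:ℚ) + (576)*(m:ℚ)^2*(k:ℚ) + (-384)*(m:ℚ)^2*(k:ℚ)*(i:ℚ) + (-1536)*(m:ℚ)^2*(k:ℚ)^2 + (1024)*(m:ℚ)^2*(k:ℚ)^2*(i:ℚ) + (768)*(m:ℚ)^2*(k:ℚ)^3 + (-512)*(m:ℚ)^2*(k:ℚ)^3*(i:ℚ))) * (((k:ℚ)-1-(i:ℚ)) * binC (k-1) i * binC m i)) * e2
    + (((2*(i:ℚ)-1)*(2*(m:ℚ)-2*(i:ℚ)-1)) * (((72) + (-192)*(i:ℚ) + (-192)*(i:ℚ)^2 + (768)*(i:ℚ)^3 + (-384)*(i:ℚ)^4 + (-192)*(k:ℚ) + (512)*(k:ℚ)*(i:ℚ) + (512)*(k:ℚ)*(i:ℚ)^2 + (-2048)*(k:ℚ)*(i:ℚ)^3 + (1024)*(k:ℚ)*(i:ℚ)^4 + (-192)*(k:ℚ)^2 + (512)*(k:ℚ)^2*(i:ℚ) + (-640)*(k:ℚ)^2*(i:ℚ)^2 + (1024)*(k:ℚ)^2*(i:ℚ)^3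 + (-512)*(k:ℚ)^2*(i:ℚ)^4 + (768)*(k:ℚ)^3 + (-2048)*(k:ℚ)^3*(i:ℚ) + (1024)*(k:ℚ)^3*(i:ℚ)^2 + (-384)*(k:ℚ)^4 + (1024)*(k:ℚ)^4*(i:ℚ) + (-512)*(k:ℚ)^4*(i:ℚ)^2 + (576)*(m:ℚ)*(i:ℚ) + (-1536)*(m:ℚ)*(i:ℚ)^2 + (768)*(m:ℚ)*(i:ℚ)^3 + (144)*(m:ℚ)*(k:ℚ) + (-1920)*(m:ℚ)*(k:ℚ)*(i:ℚ) + (4288)*(m:ℚ)*(k:ℚ)*(i:ℚ)^2 + (-2048)*(m:ℚ)*(k:ℚ)*(i:ℚ)^3 + (-1248)*(m:ℚ)*(k:ℚ)^2 + (2944)*(m:ℚ)*(k:ℚ)^2*(i:ℚ) + (-2944)*(m:ℚ)*(k:ℚ)^2*(i:ℚ)^2 + (1024)*(m:ℚ)*(k:ℚ)^2*(i:ℚ)^3 + (1920)*(m:ℚ)*(k:ℚ)^3 + (-2048)*(m:ℚ)*(k:ℚ)^3*(i:ℚ) + (512)*(m:ℚ)*(k:ℚ)^3*(i:ℚ)^2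 + (-768)*(m:ℚ)*(k:ℚ)^4 + (512)*(m:ℚ)*(k:ℚ)^4*(i:ℚ) + (-288)*(m:ℚ)^2 + (768)*(m:ℚ)^2*(i:ℚ) + (-384)*(m:ℚ)^2*(i:ℚ)^2 + (1200)*(m:ℚ)^2*(k:ℚ) + (-2624)*(m:ℚ)^2*(k:ℚ)*(i:ℚ) + (1216)*(m:ℚ)^2*(k:ℚ)*(i:ℚ)^2 + (-1824)*(m:ℚ)^2*(k:ℚ)^2 + (2176)*(m:ℚ)^2*(k:ℚ)^2*(i:ℚ) + (-640)*(m:ℚ)^2*(k:ℚ)^2*(i:ℚ)^2 + (768)*(m:ℚ)^2*(k:ℚ)^3 + (-512)*(m:ℚ)^2*(k:ℚ)^3*(i:ℚ) + (288)*(m:ℚ)^3*(k:ℚ) + (-192)*(m:ℚ)^3*(k:ℚ)*(i:ℚ) + (-192)*(m:ℚ)^3*(k:ℚ)^2 + (128)*(m:ℚ)^3*(k:ℚ)^2*(i:ℚ))) * (-((m:ℚ)-(k:ℚ)+1) * binC i (m-k+1) * binC m i)) * e3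
    + (((2*(i:ℚ)-1)*(2*(m:ℚ)-2*(i:ℚ)-1)) * (((72) + (-192)*(i:ℚ) + (-192)*(i:ℚ)^2 + (768)*(i:ℚ)^3 + (-384)*(i:ℚ)^4 + (-192)*(k:ℚ) + (512)*(k:ℚ)*(i:ℚ) + (512)*(k:ℚ)*(i:ℚ)^2 + (-2048)*(k:ℚ)*(i:ℚ)^3 + (1024)*(k:ℚ)*(i:ℚ)^4 + (-192)*(k:ℚ)^2 + (512)*(k:ℚ)^2*(i:ℚ) + (-640)*(k:ℚ)^2*(i:ℚ)^2 + (1024)*(k:ℚ)^2*(i:ℚ)^3 + (-512)*(k:ℚ)^2*(i:ℚ)^4 + (768)*(k:ℚ)^3 + (-2048)*(k:ℚ)^3*(i:ℚ) + (1024)*(k:ℚ)^3*(i:ℚ)^2 + (-384)*(k:ℚ)^4 + (1024)*(k:ℚ)^4*(i:ℚ) + (-512)*(k:ℚ)^4*(i:ℚ)^2 + (576)*(m:ℚ)*(i:ℚ) + (-1536)*(m:ℚ)*(i:ℚ)^2 + (768)*(m:ℚ)*(i:ℚ)^3 + (144)*(m:ℚ)*(k:ℚ) + (-1920)*(m:ℚ)*(k:ℚ)*(i:ℚ)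 + (4288)*(m:ℚ)*(k:ℚ)*(i:ℚ)^2 + (-2048)*(m:ℚ)*(k:ℚ)*(i:ℚ)^3 + (-1248)*(m:ℚ)*(k:ℚ)^2 + (2944)*(m:ℚ)*(k:ℚ)^2*(i:ℚ) + (-2944)*(m:ℚ)*(k:ℚ)^2*(i:ℚ)^2 + (1024)*(m:ℚ)*(k:ℚ)^2*(i:ℚ)^3 + (1920)*(m:ℚ)*(k:ℚ)^3 + (-2048)*(m:ℚ)*(k:ℚ)^3*(i:ℚ) + (512)*(m:ℚ)*(k:ℚ)^3*(i:ℚ)^2 + (-768)*(m:ℚ)*(k:ℚ)^4 + (512)*(m:ℚ)*(k:ℚ)^4*(i:ℚ) + (-288)*(m:ℚ)^2 + (768)*(m:ℚ)^2*(i:ℚ) + (-384)*(m:ℚ)^2*(i:ℚ)^2 + (1200)*(m:ℚ)^2*(k:ℚ) + (-2624)*(m:ℚ)^2*(k:ℚ)*(i:ℚ) + (1216)*(m:ℚ)^2*(k:ℚ)*(i:ℚ)^2 + (-1824)*(m:ℚ)^2*(k:ℚ)^2 + (2176)*(m:ℚ)^2*(k:ℚ)^2*(i:ℚ) + (-640)*(m:ℚ)^2*(k:ℚ)^2*(i:ℚ)^2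 + (768)*(m:ℚ)^2*(k:ℚ)^3 + (-512)*(m:ℚ)^2*(k:ℚ)^3*(i:ℚ) + (288)*(m:ℚ)^3*(k:ℚ) + (-192)*(m:ℚ)^3*(k:ℚ)*(i:ℚ) + (-192)*(m:ℚ)^3*(k:ℚ)^2 + (128)*(m:ℚ)^3*(k:ℚ)^2*(i:ℚ))) * (((k:ℚ)-(i:ℚ)) * binC k i * binC m i)) * e4
    + (((2*(i:ℚ)-1)*(2*(m:ℚ)-2*(i:ℚ)-1)) * (((-36) + (168)*(i:ℚ) + (-96)*(i:ℚ)^2 + (-576)*(i:ℚ)^3 + (960)*(i:ℚ)^4 + (-384)*(i:ℚ)^5 + (24)*(k:ℚ) + (-112)*(k:ℚ)*(i:ℚ) + (64)*(k:ℚ)*(i:ℚ)^2 + (384)*(k:ℚ)*(i:ℚ)^3 + (-640)*(k:ℚ)*(i:ℚ)^4 + (256)*(k:ℚ)*(i:ℚ)^5 + (-36)*(m:ℚ) + (-192)*(m:ℚ)*(i:ℚ) + (1440)*(m:ℚ)*(i:ℚ)^2 + (-2304)*(m:ℚ)*(i:ℚ)^3 + (960)*(m:ℚ)*(i:ℚ)^4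 + (24)*(m:ℚ)*(k:ℚ) + (128)*(m:ℚ)*(k:ℚ)*(i:ℚ) + (-960)*(m:ℚ)*(k:ℚ)*(i:ℚ)^2 + (1536)*(m:ℚ)*(k:ℚ)*(i:ℚ)^3 + (-640)*(m:ℚ)*(k:ℚ)*(i:ℚ)^4 + (144)*(m:ℚ)^2 + (-960)*(m:ℚ)^2*(i:ℚ) + (1728)*(m:ℚ)^2*(i:ℚ)^2 + (-768)*(m:ℚ)^2*(i:ℚ)^3 + (-96)*(m:ℚ)^2*(k:ℚ) + (640)*(m:ℚ)^2*(k:ℚ)*(i:ℚ) + (-1152)*(m:ℚ)^2*(k:ℚ)*(i:ℚ)^2 + (512)*(m:ℚ)^2*(k:ℚ)*(i:ℚ)^3 + (144)*(m:ℚ)^3 + (-384)*(m:ℚ)^3*(i:ℚ) + (192)*(m:ℚ)^3*(i:ℚ)^2 + (-96)*(m:ℚ)^3*(k:ℚ) + (256)*(m:ℚ)^3*(k:ℚ)*(i:ℚ) + (-128)*(m:ℚ)^3*(k:ℚ)*(i:ℚ)^2)) * ((i:ℚ) * binC m i * binC (i-1) (m-k))) * e5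
    + (((2*(i:ℚ)-1)*(2*(m:ℚ)-2*(i:ℚ)-1)) * (((-36) + (168)*(i:ℚ) + (-96)*(i:ℚ)^2 + (-576)*(i:ℚ)^3 + (960)*(i:ℚ)^4 + (-384)*(i:ℚ)^5 + (24)*(k:ℚ) + (-112)*(k:ℚ)*(i:ℚ) + (64)*(k:ℚ)*(i:ℚ)^2 + (384)*(k:ℚ)*(i:ℚ)^3 + (-640)*(k:ℚ)*(i:ℚ)^4 + (256)*(k:ℚ)*(i:ℚ)^5 + (-36)*(m:ℚ) + (-192)*(m:ℚ)*(i:ℚ) + (1440)*(m:ℚ)*(i:ℚ)^2 + (-2304)*(m:ℚ)*(i:ℚ)^3 + (960)*(m:ℚ)*(i:ℚ)^4 + (24)*(m:ℚ)*(k:ℚ) + (128)*(m:ℚ)*(k:ℚ)*(i:ℚ) + (-960)*(m:ℚ)*(k:ℚ)*(i:ℚ)^2 + (1536)*(m:ℚ)*(k:ℚ)*(i:ℚ)^3 + (-640)*(m:ℚ)*(k:ℚ)*(i:ℚ)^4 + (144)*(m:ℚ)^2 + (-960)*(m:ℚ)^2*(i:ℚ) + (1728)*(m:ℚ)^2*(i:ℚ)^2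 + (-768)*(m:ℚ)^2*(i:ℚ)^3 + (-96)*(m:ℚ)^2*(k:ℚ) + (640)*(m:ℚ)^2*(k:ℚ)*(i:ℚ) + (-1152)*(m:ℚ)^2*(k:ℚ)*(i:ℚ)^2 + (512)*(m:ℚ)^2*(k:ℚ)*(i:ℚ)^3 + (144)*(m:ℚ)^3 + (-384)*(m:ℚ)^3*(i:ℚ) + (192)*(m:ℚ)^3*(i:ℚ)^2 + (-96)*(m:ℚ)^3*(k:ℚ) + (256)*(m:ℚ)^3*(k:ℚ)*(i:ℚ) + (-128)*(m:ℚ)^3*(k:ℚ)*(i:ℚ)^2)) * (((k:ℚ)-(i:ℚ)+1) * binC k (i-1) * binC (i-1) (m-k))) * e6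
    + (((2*(i:ℚ)-1)*(2*(m:ℚ)-2*(i:ℚ)-1)) * (((-36) + (168)*(i:ℚ) + (-96)*(i:ℚ)^2 + (-576)*(i:ℚ)^3 + (960)*(i:ℚ)^4 + (-384)*(i:ℚ)^5 + (24)*(k:ℚ) + (-112)*(k:ℚ)*(i:ℚ) + (64)*(k:ℚ)*(i:ℚ)^2 + (384)*(k:ℚ)*(i:ℚ)^3 + (-640)*(k:ℚ)*(i:ℚ)^4 + (256)*(k:ℚ)*(i:ℚ)^5 + (-36)*(m:ℚ) + (-192)*(m:ℚ)*(i:ℚ) + (1440)*(m:ℚ)*(i:ℚ)^2 + (-2304)*(m:ℚ)*(i:ℚ)^3 + (960)*(m:ℚ)*(i:ℚ)^4 + (24)*(m:ℚ)*(k:ℚ) + (128)*(m:ℚ)*(k:ℚ)*(i:ℚ) + (-960)*(m:ℚ)*(k:ℚ)*(i:ℚ)^2 + (1536)*(m:ℚ)*(k:ℚ)*(i:ℚ)^3 + (-640)*(m:ℚ)*(k:ℚ)*(i:ℚ)^4 + (144)*(m:ℚ)^2 + (-960)*(m:ℚ)^2*(i:ℚ) + (1728)*(m:ℚ)^2*(i:ℚ)^2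 + (-768)*(m:ℚ)^2*(i:ℚ)^3 + (-96)*(m:ℚ)^2*(k:ℚ) + (640)*(m:ℚ)^2*(k:ℚ)*(i:ℚ) + (-1152)*(m:ℚ)^2*(k:ℚ)*(i:ℚ)^2 + (512)*(m:ℚ)^2*(k:ℚ)*(i:ℚ)^3 + (144)*(m:ℚ)^3 + (-384)*(m:ℚ)^3*(i:ℚ) + (192)*(m:ℚ)^3*(i:ℚ)^2 + (-96)*(m:ℚ)^3*(k:ℚ) + (256)*(m:ℚ)^3*(k:ℚ)*(i:ℚ) + (-128)*(m:ℚ)^3*(k:ℚ)*(i:ℚ)^2)) * ((i:ℚ) * binC k i * binC m i)) * e7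

noncomputable def Ssum (m k : ℤ) : ℚ :=
  if m < 0 then 0 else ∑ i ∈ Finset.Icc 0 m, gg m k i

lemma sum_tele (f : ℤ → ℚ) (m : ℤ) (hm : 0 ≤ m) :
    ∑ i ∈ Finset.Icc 0 m, (f (i+1) - f i) = f (m+1) - f 0 := by
  obtain ⟨n, rfl⟩ : ∃ n : ℕ, m = (n:ℤ) := ⟨m.toNat, by omega⟩
  induction n with
  | zero => simp
  | succ n ih =>
    rw [show ((n+1:ℕ):ℤ) = (n:ℤ)+1 from by push_cast; ring]
    rw [show Finset.Icc (0:ℤ) ((n:ℤ)+1) = insert ((n:ℤ)+1) (Finset.Icc 0 (n:ℤ)) from by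
          ext x; simp only [Finset.mem_Icc, Finset.mem_insert]; omega,
        Finset.sum_insert (by simp only [Finset.mem_Icc]; omega), ih (by positivity)]
    ring

lemma GG_zero (m k : ℤ) : GG m k 0 = 0 := by
  have h : binC k ((0:ℤ)-1) = 0 := binC_neg _ _ (by norm_num)
  rw [GG, h]
  simp

lemma GG_top (m k : ℤ) (hm : 0 ≤ m) : GG m k (m+1) = 0 := by
  rw [GG, show ((m:ℚ) - ((m+1:ℤ):ℚ) + 1) = 0 from by push_cast; ring]
  simp

lemma S3s (m k : ℤ) :
    ((k:ℚ)*((k:ℚ)-1)*(-32*(2*(k:ℚ)-3)*(2*(k:ℚ)-1)*((m:ℚ)-(k:ℚ)+1)*((m:ℚ)-(k:ℚ)+2))) * Ssum m (k-2)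
    + (2*(k:ℚ)*(2*(k:ℚ)-3)*(4*((m:ℚ)-(k:ℚ)+1)*(2*(m:ℚ)^2*(k:ℚ)-16*(m:ℚ)*(k:ℚ)^2+18*(m:ℚ)*(k:ℚ)-6*(m:ℚ)+16*(k:ℚ)^3-24*(k:ℚ)^2+14*(k:ℚ)-3))) * Ssum m (k-1)
    + (4*(2*(k:ℚ)-3)*(2*(k:ℚ)-1)*((k:ℚ)*((m:ℚ)-2*(k:ℚ))*(2*((m:ℚ)-2*(k:ℚ))*((m:ℚ)-(k:ℚ))+(m:ℚ)-1))) * Ssum m k = 0 := by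
  by_cases hm : m < 0
  · simp [Ssum, hm]
  · push_neg at hm
    rw [Ssum, if_neg (not_lt.2 hm), Ssum, if_neg (not_lt.2 hm), Ssum, if_neg (not_lt.2 hm),
        Finset.mul_sum, Finset.mul_sum, Finset.mul_sum, ← Finset.sum_add_distrib,
        ← Finset.sum_add_distrib]
    rw [Finset.sum_congr rfl (fun i _ => tele m k i), sum_tele (GG m k) m hm,
        GG_zero, GG_top m k hm]
    ring

/-- The coefficients `d(m,k)`; zero for `m < 0`. -/
noncomputable def dd (m k : ℤ) : ℚ :=
  if m < 0 then 0 else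
  ∑ i ∈ Finset.Icc 0 m, ∑ j ∈ Finset.Icc k m,
    3 * (-1 : ℚ) ^ (k + j) * binC (2 * k) k * binC j i * binC m i * binC i (m - j) /
      (2 * (2 * i - 1) * (2 * j + 1) * (2 * m - 2 * i - 1))

lemma L1 (m k : ℤ) :
    2*(2*(k:ℚ)+1) * dd m k + ((k:ℚ)+1) * dd m (k+1) = 3 * binC (2*k) k * Ssum m k := by
  by_cases hm : m < 0
  · simp [dd, Ssum, hm]
  · push_neg at hm
    rw [dd, if_neg (not_lt.2 hm), dd, if_neg (not_lt.2 hm), Ssum, if_neg (not_lt.2 hm),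
        Finset.mul_sum, Finset.mul_sum, Finset.mul_sum, ← Finset.sum_add_distrib]
    apply Finset.sum_congr rfl
    intro i _
    by_cases hkm : k ≤ m
    · rw [show Finset.Icc k m = insert k (Finset.Icc (k+1) m) from by
            ext x; simp only [Finset.mem_Icc, Finset.mem_insert]; omega,
          Finset.sum_insert (by simp only [Finset.mem_Icc]; omega)]
      have hcomb : 2*(2*(k:ℚ)+1) * (∑ j ∈ Finset.Icc (k+1) m,
            3 * (-1 : ℚ) ^ (k + j) * binC (2 * k) k * binC j i * binC m i * binC i (m - j) /
              (2 * (2 * i - 1) * (2 * j + 1) * (2 * m - 2 * i - 1)))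
          + ((k:ℚ)+1) * (∑ j ∈ Finset.Icc (k+1) m,
            3 * (-1 : ℚ) ^ ((k+1) + j) * binC (2 * (k+1)) (k+1) * binC j i * binC m i * binC i (m - j) /
              (2 * (2 * i - 1) * (2 * j + 1) * (2 * m - 2 * i - 1))) = 0 := by
        rw [Finset.mul_sum, Finset.mul_sum, ← Finset.sum_add_distrib]
        apply Finset.sum_eq_zero
        intro j _
        have hsign : ((-1:ℚ))^(k+1+j) = -((-1:ℚ))^(k+j) := by
          rw [show k+1+j = (k+j)+1 from by ring, zpow_add_one₀ (by norm_num : (-1:ℚ) ≠ 0)]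
          ring
        have hc := binC_central k
        have hd1 : (2*(i:ℚ)-1) ≠ 0 := by
          have := odd_ne (i-1); push_cast at this; intro h; apply this; linarith
        have hd2 : (2*(m:ℚ)-2*(i:ℚ)-1) ≠ 0 := by
          have := odd_ne (m-i-1); push_cast at this; intro h; apply this; linarith
        have hdj : (2*(j:ℚ)+1) ≠ 0 := by
          have := odd_ne j; push_cast at this; intro h; apply this; linarith
        rw [hsign]
        linear_combination (-3 * ((-1:ℚ))^(k+j) * binC j i * binC m i * binC i (m-j) / (2 * (2 * (i:ℚ) - 1) * (2 * (j:ℚ) + 1) * (2 * (m:ℚ) - 2 * (i:ℚ) - 1))) * hc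
      have hbound : 2*(2*(k:ℚ)+1) *
            (3 * (-1 : ℚ) ^ (k + k) * binC (2 * k) k * binC k i * binC m i * binC i (m - k) /
              (2 * (2 * i - 1) * (2 * k + 1) * (2 * m - 2 * i - 1)))
          = 3 * binC (2*k) k * gg m k i := by
        have hsgn : ((-1:ℚ))^(k+k) = 1 := by
          rw [show k+k = 2*k from by ring, zpow_mul]
          norm_num
        rw [hsgn, gg]
        have hd1 : (2*(i:ℚ)-1) ≠ 0 := by
          have := odd_ne (i-1); push_cast at this; intro h; apply this; linarith
        have hd2 : (2*(m:ℚ)-2*(i:ℚ)-1) ≠ 0 := by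
          have := odd_ne (m-i-1); push_cast at this; intro h; apply this; linarith
        have hd3 : (2*(k:ℚ)+1) ≠ 0 := by
          have := odd_ne k; push_cast at this; intro h; apply this; linarith
        field_simp
      linear_combination hbound + hcomb
    · rw [Finset.Icc_eq_empty (by omega), Finset.Icc_eq_empty (by omega),
          Finset.sum_empty, Finset.sum_empty]
      have hz : binC i (m-k) = 0 := binC_neg _ _ (by omega)
      rw [gg, hz]
      simp

noncomputable def rel1 (m k : ℤ) : ℚ :=
  -32 * (3 - 2 * k) ^ 2 * (m - k + 1) * (m - k + 2) * dd m (k - 2) +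
    4 * (m - k + 1) *
      (2 * k * m ^ 2 - 2 * (k - 1) * (8 * k - 9) * m + (2 * k - 3) * (8 * (k - 2) * k + 9)) *
      dd m (k - 1) +
    k * (m - 2 * k + 2) * (m - 2 * k + 3) * (2 * m - 2 * k + 1) * dd m k

lemma S3X (m k : ℤ) :
    (-32*(2*(k:ℚ)-3)*(2*(k:ℚ)-1)*((m:ℚ)-(k:ℚ)+1)*((m:ℚ)-(k:ℚ)+2)) * (binC (2*(k-2)) (k-2) * Ssum m (k-2))
    + (4*((m:ℚ)-(k:ℚ)+1)*(2*(m:ℚ)^2*(k:ℚ)-16*(m:ℚ)*(k:ℚ)^2+18*(m:ℚ)*(k:ℚ)-6*(m:ℚ)+16*(k:ℚ)^3-24*(k:ℚ)^2+14*(k:ℚ)-3)) * (binC (2*(k-1)) (k-1) * Ssum m (k-1))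
    + ((k:ℚ)*((m:ℚ)-2*(k:ℚ))*(2*((m:ℚ)-2*(k:ℚ))*((m:ℚ)-(k:ℚ))+(m:ℚ)-1)) * (binC (2*k) k * Ssum m k)
    = 0 := by
  by_cases hk2 : 2 ≤ k
  · have h := S3s m k
    have b1 := binC_central (k-2)
    rw [show (k:ℤ)-2+1 = k-1 from by ring] at b1
    push_cast at b1
    have b2 := binC_central (k-1)
    rw [show (k:ℤ)-1+1 = k from by ring] at b2
    push_cast at b2
    have hkk : ((k:ℚ)*((k:ℚ)-1)) ≠ 0 := by
      have h1 : ((k:ℚ)) ≠ 0 := by exact_mod_cast (by omega : (k:ℤ) ≠ 0)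
      have h2 : ((k:ℚ)-1) ≠ 0 := by
        intro hz
        have : ((k-1 : ℤ):ℚ) = 0 := by push_cast; linarith
        have : (k-1:ℤ) = 0 := by exact_mod_cast this
        omega
      exact mul_ne_zero h1 h2
    have key : (k:ℚ)*((k:ℚ)-1) * ((-32*(2*(k:ℚ)-3)*(2*(k:ℚ)-1)*((m:ℚ)-(k:ℚ)+1)*((m:ℚ)-(k:ℚ)+2)) * (binC (2*(k-2)) (k-2) * Ssum m (k-2))
        + (4*((m:ℚ)-(k:ℚ)+1)*(2*(m:ℚ)^2*(k:ℚ)-16*(m:ℚ)*(k:ℚ)^2+18*(m:ℚ)*(k:ℚ)-6*(m:ℚ)+16*(k:ℚ)^3-24*(k:ℚ)^2+14*(k:ℚ)-3)) * (binC (2*(k-1)) (k-1) * Ssum m (k-1))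
        + ((k:ℚ)*((m:ℚ)-2*(k:ℚ))*(2*((m:ℚ)-2*(k:ℚ))*((m:ℚ)-(k:ℚ))+(m:ℚ)-1)) * (binC (2*k) k * Ssum m k)) = 0 := by
      linear_combination (binC (2*(k-2)) (k-2)) * h
        + ((4*((m:ℚ)-(k:ℚ)+1)*(2*(m:ℚ)^2*(k:ℚ)-16*(m:ℚ)*(k:ℚ)^2+18*(m:ℚ)*(k:ℚ)-6*(m:ℚ)+16*(k:ℚ)^3-24*(k:ℚ)^2+14*(k:ℚ)-3)) * Ssum m (k-1) * (k:ℚ)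
           + ((k:ℚ)*((m:ℚ)-2*(k:ℚ))*(2*((m:ℚ)-2*(k:ℚ))*((m:ℚ)-(k:ℚ))+(m:ℚ)-1)) * Ssum m k * 2*(2*(k:ℚ)-1)) * b1
        + (((k:ℚ)*((m:ℚ)-2*(k:ℚ))*(2*((m:ℚ)-2*(k:ℚ))*((m:ℚ)-(k:ℚ))+(m:ℚ)-1)) * Ssum m k * ((k:ℚ)-1)) * b2
    exact (mul_eq_zero.mp key).resolve_left hkk
  · by_cases hk1 : k = 1
    · subst hk1
      have h := S3s m 1
      have hz : binC (2*((1:ℤ)-2)) ((1:ℤ)-2) = 0 := binC_neg _ _ (by norm_num)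
      rw [hz]
      have hb00 : binC 0 0 = 1 := binC_zero 0
      have hb21 : binC 2 1 = 2 := by
        rw [binC_nonneg 2 1 (by norm_num)]
        norm_num
      norm_num at h ⊢
      rw [hb00, hb21]
      linear_combination (-1/2 : ℚ) * h
    · by_cases hk0 : k = 0
      · subst hk0
        have hz1 : binC (2*((0:ℤ)-2)) ((0:ℤ)-2) = 0 := binC_neg _ _ (by norm_num)
        have hz2 : binC (2*((0:ℤ)-1)) ((0:ℤ)-1) = 0 := binC_neg _ _ (by norm_num)
        rw [hz1, hz2]
        norm_num
      · have hz1 : binC (2*(k-2)) (k-2) = 0 := binC_neg _ _ (by omega)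
        have hz2 : binC (2*(k-1)) (k-1) = 0 := binC_neg _ _ (by omega)
        have hz3 : binC (2*k) k = 0 := binC_neg _ _ (by omega)
        rw [hz1, hz2, hz3]
        ring

lemma master (m k : ℤ) :
    2*(2*(k:ℚ)-1) * rel1 m k + (k:ℚ) * rel1 m (k+1) =
    3*((-32*(2*(k:ℚ)-3)*(2*(k:ℚ)-1)*((m:ℚ)-(k:ℚ)+1)*((m:ℚ)-(k:ℚ)+2)) * (binC (2*(k-2)) (k-2) * Ssum m (k-2))
      + (4*((m:ℚ)-(k:ℚ)+1)*(2*(m:ℚ)^2*(k:ℚ)-16*(m:ℚ)*(k:ℚ)^2+18*(m:ℚ)*(k:ℚ)-6*(m:ℚ)+16*(k:ℚ)^3-24*(k:ℚ)^2+14*(k:ℚ)-3)) * (binC (2*(k-1)) (k-1) * Ssum m (k-1))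
      + ((k:ℚ)*((m:ℚ)-2*(k:ℚ))*(2*((m:ℚ)-2*(k:ℚ))*((m:ℚ)-(k:ℚ))+(m:ℚ)-1)) * (binC (2*k) k * Ssum m k)) := by
  have l1 := L1 m (k-2)
  rw [show (k:ℤ)-2+1 = k-1 from by ring] at l1
  push_cast at l1
  have l2 := L1 m (k-1)
  rw [show (k:ℤ)-1+1 = k from by ring] at l2
  push_cast at l2
  have l3 := L1 m k
  rw [rel1, rel1, show k+1-2 = k-1 from by ring, show k+1-1 = k from by ring]
  push_cast
  linear_combination
      (-32*(2*(k:ℚ)-3)*(2*(k:ℚ)-1)*((m:ℚ)-(k:ℚ)+1)*((m:ℚ)-(k:ℚ)+2)) * l1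
    + (4*((m:ℚ)-(k:ℚ)+1)*(2*(m:ℚ)^2*(k:ℚ)-16*(m:ℚ)*(k:ℚ)^2+18*(m:ℚ)*(k:ℚ)-6*(m:ℚ)+16*(k:ℚ)^3-24*(k:ℚ)^2+14*(k:ℚ)-3)) * l2
    + ((k:ℚ)*((m:ℚ)-2*(k:ℚ))*(2*((m:ℚ)-2*(k:ℚ))*((m:ℚ)-(k:ℚ))+(m:ℚ)-1)) * l3

lemma dd_of_lt (m k : ℤ) (h : m < k) : dd m k = 0 := by
  rw [dd]
  split
  · rfl
  · apply Finset.sum_eq_zero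
    intro i _
    rw [Finset.Icc_eq_empty (by omega), Finset.sum_empty]

lemma rel1_big (m k : ℤ) (h : m+3 ≤ k) : rel1 m k = 0 := by
  rw [rel1, dd_of_lt m (k-2) (by omega), dd_of_lt m (k-1) (by omega), dd_of_lt m k (by omega)]
  ring

lemma descent (m : ℤ) : ∀ n : ℕ, ∀ k : ℤ, m+3 ≤ k + n → rel1 m k = 0 := by
  intro n
  induction n with
  | zero => intro k h; exact rel1_big m k (by omega)
  | succ n ih =>
    intro k h
    have h1 : rel1 m (k+1) = 0 := ih (k+1) (by push_cast at h ⊢; omega)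
    have hm := master m k
    have hx := S3X m k
    have key : 2*(2*(k:ℚ)-1) * rel1 m k = 0 := by
      linear_combination hm + 3*hx - (k:ℚ)*h1
    have hne : (2*(2*(k:ℚ)-1)) ≠ 0 := by
      have := odd_ne (k-1); push_cast at this
      intro hz; apply this; linarith
    exact (mul_eq_zero.mp key).resolve_left hne

theorem rel1_eq_zero (m k : ℤ) : rel1 m k = 0 := by
  exact descent m (m+3-k).toNat k (by omega)
end
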